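/- Let (G,Λ) be a Γ-labeled graph with a separation (A,B) such that G[A] is clean (contains no non-null cycle) and all arcs with both endpoints in A are labeled 1_Γ. Let Q ⊆ V(G) and suppose C is a non-null cycle in G − Q passing through a vertex v ∈ A \ B. If P is a subpath of C between two vertices α, β ∈ A ∩ B that is internally disjoint from A ∩ B and contains v, and if there exists an α–β path P' in G[A] − v − Q, then replacing P by P' in C yields a non-null closed walk in (G − v) − Q; consequently Q is not a group feedback vertex set of G − v. -/

import Mathlib

/-- The label (ordered product of arc labels) of a walk in a `Γ`-labeled graph,
where the labeling is given as a skew-symmetric function `Λ : V → V → Γ`. -/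
def walkLabel {V : Type} {Γ : Type} [Group Γ] (G : SimpleGraph V) (Λ : V → V → Γ) :
    {u v : V} → G.Walk u v → Γ
  | _, _, SimpleGraph.Walk.nil => 1
  | _, _, SimpleGraph.Walk.cons (u := a) (v := b) _ p => Λ a b * walkLabel G Λ p

open SimpleGraph Walk

lemma walkLabel_append {V Γ : Type} [Group Γ] (G : SimpleGraph V) (Λ : V → V → Γ)
    {u v w : V} (p : G.Walk u v) (q : G.Walk v w) :
    walkLabel G Λ (p.append q) = walkLabel G Λ p * walkLabel G Λ q := by
  induction p with
  | nil => simp [walkLabel]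
  | cons h p ih => simp [walkLabel, ih, mul_assoc]

lemma walkLabel_eq_one {V Γ : Type} [Group Γ] (G : SimpleGraph V) (Λ : V → V → Γ)
    (A : Set V) (hid : ∀ u w : V, G.Adj u w → u ∈ A → w ∈ A → Λ u w = 1)
    {u v : V} (p : G.Walk u v) (hA : ∀ x ∈ p.support, x ∈ A) :
    walkLabel G Λ p = 1 := by
  induction p with
  | nil => rfl
  | cons h p ih =>
    rename_i a b c
    have ha : a ∈ A := hA a (by simp)
    have hb : b ∈ A := hA b (by simp)
    rw [show walkLabel G Λ (Walk.cons h p) = Λ a b * walkLabel G Λ p from rfl,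
      hid a b h ha hb, one_mul]
    exact ih fun x hx => hA x (by simp [hx])

lemma label_one_of_back_edge {V Γ : Type} [Group Γ] (G : SimpleGraph V) (Λ : V → V → Γ)
    (hskew : ∀ u v : V, Λ v u = (Λ u v)⁻¹) {a y : V} (h : G.Adj y a) (r : G.Walk a y)
    (hr : r.IsPath) (he : s(y, a) ∈ r.edges) :
    walkLabel G Λ (Walk.cons h r) = 1 := by
  cases r with
  | nil => simp at he
  | cons h' r' =>
    rename_i c
    rw [Walk.edges_cons, List.mem_cons] at he
    rcases he with he | he
    · rw [Sym2.eq_iff] at he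
      rcases he with ⟨h1, h2⟩ | ⟨h1, _⟩
      · exact absurd h1 h.ne
      · subst h1
        have : r' = Walk.nil := (Walk.isPath_iff_eq_nil (p := r')).mp hr.of_cons
        subst this
        show Λ y a * (Λ a y * 1) = 1
        rw [hskew a y, mul_one, inv_mul_cancel]
    · exfalso
      have : a ∈ r'.support := Walk.snd_mem_support_of_mem_edges r' he
      exact ((Walk.cons_isPath_iff h' r').mp hr).2 this

/-- Any closed walk with non-identity label contains a non-null cycle whose
support is contained in the walk's support. -/
lemma exists_cycle_of_nonnull {V Γ : Type} [Group Γ] (G : SimpleGraph V) (Λ : V → V → Γ)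
    (hskew : ∀ u v : V, Λ v u = (Λ u v)⁻¹) :
    ∀ (n : ℕ) (y : V) (w : G.Walk y y), w.length ≤ n → walkLabel G Λ w ≠ 1 →
      ∃ (z : V) (c : G.Walk z z), c.IsCycle ∧ walkLabel G Λ c ≠ 1 ∧
        ∀ x ∈ c.support, x ∈ w.support := by
  classical
  intro n
  induction n with
  | zero =>
    intro y w hl hnn
    cases w with
    | nil => exact absurd rfl hnn
    | cons h p => simp at hl
  | succ n ih =>
    intro y w hl hnn
    by_cases hnd : w.support.tail.Nodup
    · -- nodup case: w itself is essentially a cycle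
      cases w with
      | nil => exact absurd rfl hnn
      | cons h r =>
        rename_i a
        have hrsupp : r.support.Nodup := by simpa using hnd
        have hr : r.IsPath := Walk.IsPath.mk' hrsupp
        by_cases he : s(y, a) ∈ r.edges
        · exact absurd (label_one_of_back_edge G Λ hskew h r hr he) hnn
        · exact ⟨y, Walk.cons h r, (Walk.cons_isCycle_iff r h).mpr ⟨hr, he⟩, hnn,
            fun x hx => hx⟩
    · -- there is a repeated vertex; rotate and split
      obtain ⟨x, hdup⟩ := List.exists_duplicate_iff_not_nodup.mpr hnd
      have hxmem : x ∈ w.support := List.mem_of_mem_tail hdup.mem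
      have htake : (w.takeUntil x hxmem).append (w.dropUntil x hxmem) = w :=
        w.take_spec hxmem
      obtain ⟨w', hlabel', hsub', hcount, hlen''⟩ :
          ∃ w' : G.Walk x x, walkLabel G Λ w' ≠ 1 ∧
            (∀ z ∈ w'.support, z ∈ w.support) ∧
            2 ≤ w'.support.tail.count x ∧ w'.length ≤ n + 1 := by
        refine ⟨w.rotate x hxmem, ?_, ?_, ?_, ?_⟩
        · intro h1
          apply hnn
          rw [← htake, walkLabel_append]
          have h2 : walkLabel G Λ (w.dropUntil x hxmem) *
              walkLabel G Λ (w.takeUntil x hxmem) = 1 := by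
            rw [← walkLabel_append]; exact h1
          have := eq_inv_of_mul_eq_one_left h2
          rw [this, mul_inv_cancel]
        · intro z hz
          rw [Walk.rotate, Walk.mem_support_append_iff] at hz
          rcases hz with hz | hz
          · exact Walk.support_dropUntil_subset w hxmem hz
          · exact Walk.support_takeUntil_subset w hxmem hz
        · have hperm : List.Perm (w.rotate x hxmem).support.tail w.support.tail :=
            (Walk.support_rotate w x hxmem).perm
          rw [hperm.count_eq]
          exact List.duplicate_iff_two_le_count.mp hdup
        · have : (w.rotate x hxmem).length = w.length := by
            rw [Walk.rotate, Walk.length_append, add_comm, ← Walk.length_append, htake]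
          omega
      cases w' with
      | nil => simp at hcount
      | cons hadj r =>
        rename_i b
        have hxr : x ∈ r.support := by
          rw [Walk.support_cons, List.tail_cons] at hcount
          exact List.count_pos_iff.mp (by omega)
        have hrtake : (r.takeUntil x hxr).append (r.dropUntil x hxr) = r :=
          r.take_spec hxr
        set r1 := r.takeUntil x hxr with hr1
        set r2 := r.dropUntil x hxr with hr2
        -- r2 is nonempty
        have hr2len : 1 ≤ r2.length := by
          by_contra hcon
          push_neg at hcon
          interval_cases h : r2.length
          have h0 : r2.support.tail = [] := by
            have h1 := r2.length_support
            rw [h] at h1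
            apply List.length_eq_zero_iff.mp
            rw [List.length_tail, h1]
          have hc1 : r.support.count x = r1.support.count x := by
            rw [← hrtake, Walk.support_append, List.count_append, h0]
            simp
          have hc2 : r1.support.count x = 1 :=
            r.count_support_takeUntil_eq_one hxr
          have h2c : 2 ≤ r.support.count x := by
            rw [Walk.support_cons, List.tail_cons] at hcount; exact hcount
          omega
        have hsplit : walkLabel G Λ (Walk.cons hadj r) =
            walkLabel G Λ (Walk.cons hadj r1) * walkLabel G Λ r2 := by
          conv_lhs => rw [← hrtake]
          show Λ x b * walkLabel G Λ (r1.append r2) = _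
          rw [walkLabel_append]
          show _ = Λ x b * walkLabel G Λ r1 * walkLabel G Λ r2
          rw [mul_assoc]
        have hltotal : 1 + r1.length + r2.length ≤ n + 1 := by
          have : (Walk.cons hadj r).length = 1 + r1.length + r2.length := by
            rw [Walk.length_cons]
            conv_lhs => rw [← hrtake]
            rw [Walk.length_append]
            omega
          omega
        have hsub1 : ∀ z ∈ (Walk.cons hadj r1).support, z ∈ w.support := by
          intro z hz
          apply hsub'
          rw [Walk.support_cons] at hz ⊢
          rcases List.mem_cons.mp hz with hz | hz
          · simp [hz]
          · right
            exact Walk.support_takeUntil_subset r hxr hz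
        have hsub2 : ∀ z ∈ r2.support, z ∈ w.support := by
          intro z hz
          apply hsub'
          rw [Walk.support_cons]
          right
          exact Walk.support_dropUntil_subset r hxr hz
        by_cases h1 : walkLabel G Λ (Walk.cons hadj r1) = 1
        · have h2 : walkLabel G Λ r2 ≠ 1 := by
            intro h2; apply hlabel'; rw [hsplit, h1, h2, mul_one]
          obtain ⟨z, c, hc, hcnn, hcsub⟩ := ih x r2 (by omega) h2
          exact ⟨z, c, hc, hcnn, fun t ht => hsub2 t (hcsub t ht)⟩
        · obtain ⟨z, c, hc, hcnn, hcsub⟩ :=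
            ih x (Walk.cons hadj r1) (by simp [Walk.length_cons]; omega) h1
          exact ⟨z, c, hc, hcnn, fun t ht => hsub1 t (hcsub t ht)⟩

theorem stmt11 {V Γ : Type} [Group Γ] (G : SimpleGraph V) (Λ : V → V → Γ)
    (hskew : ∀ u v : V, Λ v u = (Λ u v)⁻¹)
    (A B : Set V) (hcover : A ∪ B = Set.univ)
    (hnoedge : ∀ u w : V, G.Adj u w → u ∈ A \ B → w ∉ B \ A)
    (hclean : ∀ (u : V) (c : G.Walk u u), c.IsCycle →
      (∀ x ∈ c.support, x ∈ A) → walkLabel G Λ c = 1)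
    (hid : ∀ u w : V, G.Adj u w → u ∈ A → w ∈ A → Λ u w = 1)
    (Q : Set V) (v : V) (hv : v ∈ A \ B)
    (α β : V) (hα : α ∈ A ∩ B) (hβ : β ∈ A ∩ B)
    (P : G.Walk α β) (Rest : G.Walk β α)
    (hcyc : (P.append Rest).IsCycle)
    (hQdisj : ∀ x ∈ (P.append Rest).support, x ∉ Q)
    (hnn : walkLabel G Λ (P.append Rest) ≠ 1)
    (hvP : v ∈ P.support)
    (hPA : ∀ x ∈ P.support, x ∈ A)
    (hPint : ∀ x ∈ P.support, x ≠ α → x ≠ β → x ∉ A ∩ B)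
    (P' : G.Walk α β) (hP' : P'.IsPath)
    (hP'A : ∀ x ∈ P'.support, x ∈ A)
    (hP'v : v ∉ P'.support) (hP'Q : ∀ x ∈ P'.support, x ∉ Q) :
    walkLabel G Λ (P'.append Rest) ≠ 1 ∧
    (∀ x ∈ (P'.append Rest).support, x ∉ Q ∧ x ≠ v) ∧
    ∃ (y : V) (c : G.Walk y y), c.IsCycle ∧ walkLabel G Λ c ≠ 1 ∧
      ∀ x ∈ c.support, x ∉ Q ∧ x ≠ v := by
  classical
  have hPlbl : walkLabel G Λ P = 1 := walkLabel_eq_one G Λ A hid P hPA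
  have hP'lbl : walkLabel G Λ P' = 1 := walkLabel_eq_one G Λ A hid P' hP'A
  have hRestnn : walkLabel G Λ Rest ≠ 1 := by
    intro h1; apply hnn; rw [walkLabel_append, hPlbl, h1, one_mul]
  have goal1 : walkLabel G Λ (P'.append Rest) ≠ 1 := by
    rw [walkLabel_append, hP'lbl, one_mul]; exact hRestnn
  -- v is not on Rest
  have hvα : v ≠ α := by
    rintro rfl; exact hv.2 hα.2
  have hvβ : v ≠ β := by
    rintro rfl; exact hv.2 hβ.2
  have hvRest : v ∉ Rest.support := by
    intro hvR
    have hnodup : (P.append Rest).support.tail.Nodup := hcyc.support_nodup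
    rw [Walk.tail_support_append] at hnodup
    have hv1 : v ∈ P.support.tail := by
      rcases List.mem_cons.mp (P.support_eq_cons ▸ hvP) with h | h
      · exact absurd h hvα
      · exact h
    have hv2 : v ∈ Rest.support.tail := by
      rcases List.mem_cons.mp (Rest.support_eq_cons ▸ hvR) with h | h
      · exact absurd h hvβ
      · exact h
    exact (List.disjoint_of_nodup_append hnodup) hv1 hv2
  have goal2 : ∀ x ∈ (P'.append Rest).support, x ∉ Q ∧ x ≠ v := by
    intro x hx
    rcases (Walk.mem_support_append_iff _ _).mp hx with hx | hx
    · exact ⟨hP'Q x hx, fun h => hP'v (h ▸ hx)⟩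
    · refine ⟨hQdisj x ((Walk.mem_support_append_iff _ _).mpr (Or.inr hx)), ?_⟩
      rintro rfl; exact hvRest hx
  refine ⟨goal1, goal2, ?_⟩
  obtain ⟨z, c, hc, hcnn, hcsub⟩ :=
    exists_cycle_of_nonnull G Λ hskew (P'.append Rest).length α (P'.append Rest)
      le_rfl goal1
  exact ⟨z, c, hc, hcnn, fun t ht => goal2 t (hcsub t ht)⟩
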